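/- Let M ∈ rep(C_r) (r ≥ 3) be S_r-stable with dim π_λ(M) = (a, b). Then r divides a or r divides b. -/

import Mathlib

open DirectSum

/-!
# Shared framework

Concrete finite-dimensional representations of the generalized Kronecker quiver `Γ_r`
(`KRep`) and of its universal covering quiver `C_r` (an `r`-regular tree with bipartite
orientation, `CrQuiver`/`CrRep`), together with an abstract layer
(`KroneckerAR`, `CoverAR`) for the Auslander–Reiten-theoretic notions
(AR translate, components, quasi-simplicity, quasi-length, preprojective/preinjective
representations) that are not available in Mathlib.
-/

/-! ## Representations of the generalized Kronecker quiver `Γ_r` -/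

/-- A finite-dimensional representation of the `r`-Kronecker quiver `Γ_r`
(two vertices `1, 2` and `r` arrows `γ_1, …, γ_r : 1 → 2`) over `k`. -/
structure KRep (k : Type) [Field k] (r : ℕ) where
  V1 : Type
  V2 : Type
  [a1 : AddCommGroup V1]
  [a2 : AddCommGroup V2]
  [m1 : Module k V1]
  [m2 : Module k V2]
  [f1 : FiniteDimensional k V1]
  [f2 : FiniteDimensional k V2]
  map : Fin r → V1 →ₗ[k] V2

attribute [instance] KRep.a1 KRep.a2 KRep.m1 KRep.m2 KRep.f1 KRep.f2

namespace KRep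

variable {k : Type} [Field k] {r : ℕ}

/-- Morphisms of representations of `Γ_r`. -/
structure Hom (M N : KRep k r) where
  f1 : M.V1 →ₗ[k] N.V1
  f2 : M.V2 →ₗ[k] N.V2
  comm : ∀ i, (N.map i).comp f1 = f2.comp (M.map i)

/-- Isomorphisms of representations of `Γ_r`. -/
structure Iso (M N : KRep k r) where
  e1 : M.V1 ≃ₗ[k] N.V1
  e2 : M.V2 ≃ₗ[k] N.V2
  comm : ∀ i, (N.map i).comp (e1 : M.V1 →ₗ[k] N.V1) = (e2 : M.V2 →ₗ[k] N.V2).comp (M.map i)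

/-- `M` is indecomposable: it is nonzero and its endomorphism ring has no nontrivial
idempotents. -/
def Indec (M : KRep k r) : Prop :=
  ((∃ v : M.V1, v ≠ 0) ∨ (∃ v : M.V2, v ≠ 0)) ∧
  ∀ f : Hom M M, f.f1.comp f.f1 = f.f1 → f.f2.comp f.f2 = f.f2 →
    (f.f1 = 0 ∧ f.f2 = 0) ∨ (f.f1 = LinearMap.id ∧ f.f2 = LinearMap.id)

/-- `rad(M, N) ≠ 0`: there is a nonzero non-invertible homomorphism `M → N`. -/
def radNe (M N : KRep k r) : Prop :=
  ∃ f : Hom M N, (f.f1 ≠ 0 ∨ f.f2 ≠ 0) ∧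
    ¬ (Function.Bijective f.f1 ∧ Function.Bijective f.f2)

/-- The equal kernels property: `M^α = Σ α_i M(γ_i)` is injective for all `α ≠ 0`. -/
def EKP (M : KRep k r) : Prop :=
  ∀ α : Fin r → k, α ≠ 0 → Function.Injective ⇑(∑ i, α i • M.map i)

/-- The equal images property: `M^α = Σ α_i M(γ_i)` is surjective for all `α ≠ 0`. -/
def EIP (M : KRep k r) : Prop :=
  ∀ α : Fin r → k, α ≠ 0 → Function.Surjective ⇑(∑ i, α i • M.map i)

/-- The dimension vector `(dim_k M_1, dim_k M_2)`. -/
noncomputable def dimVec (M : KRep k r) : ℕ × ℕ := (Module.finrank k M.V1, Module.finrank k M.V2)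

/-- The standard duality `D` on `rep(Γ_r)`:
`(DM)_1 = (M_2)^*`, `(DM)_2 = (M_1)^*`, `(DM)(γ_i) = M(γ_i)^*`. -/
noncomputable def dual (M : KRep k r) : KRep k r where
  V1 := Module.Dual k M.V2
  V2 := Module.Dual k M.V1
  map i := (M.map i).dualMap

/-- The action of an `r × r`-matrix `A` on a representation, corresponding to the pullback
along the algebra homomorphism `φ_A` with `φ_A(γ_j) = Σ_i a_{ij} γ_i`. -/
def glAct (M : KRep k r) (A : Matrix (Fin r) (Fin r) k) : KRep k r where
  V1 := M.V1
  V2 := M.V2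
  map j := ∑ i, A i j • M.map i

/-- `M` is `GL_r(k)`-stable: `A.M ≅ M` for every `A ∈ GL_r(k)`, where `A.M` is the pullback
of `M` along `φ_{A⁻¹}`. -/
def GLStable (M : KRep k r) : Prop :=
  ∀ A : GL (Fin r) k,
    Nonempty (Iso (M.glAct ((A⁻¹ : GL (Fin r) k) : Matrix (Fin r) (Fin r) k)) M)

end KRep

/-! ## Abstract Auslander–Reiten data for `rep(Γ_r)` -/

/-- Abstract Auslander–Reiten-theoretic data for the generalized Kronecker algebra
`K_r = kΓ_r`: the AR translate `τ` (a bijection on regular indecomposables, here recorded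
as a permutation of all representations), the classes of preprojective and preinjective
representations, the relation of lying in the same AR component, and quasi-simplicity. -/
structure KroneckerAR (k : Type) [Field k] (r : ℕ) where
  /-- The Auslander–Reiten translate `τ`. -/
  tau : Equiv.Perm (KRep k r)
  /-- `M` lies in the preprojective component `𝒫`. -/
  Preproj : KRep k r → Prop
  /-- `M` lies in one of the preinjective component `ℐ`. -/
  Preinj : KRep k r → Prop
  /-- `M`, `N` lie in the same component of the AR quiver. -/
  sameComp : KRep k r → KRep k r → Prop
  sameComp_equiv : Equivalence sameComp
  sameComp_tau : ∀ M, sameComp M (tau M)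
  /-- `M` is quasi-simple (lies in the bottom layer of a `ℤA∞` component). -/
  quasiSimple : KRep k r → Prop

namespace KroneckerAR

variable {k : Type} [Field k] {r : ℕ}

/-- `M` is regular: neither preprojective nor preinjective. -/
def Regular (S : KroneckerAR k r) (M : KRep k r) : Prop := ¬ S.Preproj M ∧ ¬ S.Preinj M

/-- The regular component containing `X` has width `W(𝒞) = w`: there are quasi-simple
representations `M_𝒞` and `W_𝒞` in the component of `X` such that the `τ⁻¹`-orbit of `M_𝒞`
consists of `EKP`-representations, `τ M_𝒞 ∉ EKP` (so the cone `(M_𝒞 →)` is `EKP ∩ 𝒞`),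
dually the `τ`-orbit of `W_𝒞` consists of `EIP`-representations with `τ⁻¹ W_𝒞 ∉ EIP`
(so `(→ W_𝒞) = EIP ∩ 𝒞`), and `τ^{w+1} M_𝒞 = W_𝒞`. -/
def IsWidth (S : KroneckerAR k r) (X : KRep k r) (w : ℕ) : Prop :=
  ∃ MC WC : KRep k r, S.quasiSimple MC ∧ S.quasiSimple WC ∧
    S.sameComp X MC ∧ S.sameComp X WC ∧
    (∀ j : ℕ, ((S.tau⁻¹ ^ j) MC).EKP) ∧ ¬ (S.tau MC).EKP ∧
    (∀ j : ℕ, ((S.tau ^ j) WC).EIP) ∧ ¬ (S.tau⁻¹ WC).EIP ∧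
    (S.tau ^ (w + 1)) MC = WC

end KroneckerAR
/-! ## The universal covering quiver `C_r` -/

/-- The combinatorial data of a quiver whose underlying graph is `r`-regular and which has
bipartite orientation: a set `Src` of sources, a set `Snk` of sinks, and for each source
(resp. sink) exactly one incident arrow with label (`π`-image) `γ_i` for every `i`;
`step x i` is the target of the arrow labelled `i` starting at `x`, and `back y i` is the
source of the arrow labelled `i` ending at `y`. -/
structure BipData (r : ℕ) where
  Src : Type
  Snk : Type
  step : Src → Fin r → Snk
  back : Snk → Fin r → Src
  step_back : ∀ y i, step (back y i) i = y
  back_step : ∀ x i, back (step x i) i = x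
  step_inj : ∀ x, Function.Injective (step x)
  back_inj : ∀ y, Function.Injective (back y)

/-- The underlying (simple) graph of the quiver. -/
def BipData.graph {r : ℕ} (Q : BipData r) : SimpleGraph (Q.Src ⊕ Q.Snk) where
  Adj a b := (∃ x i, a = Sum.inl x ∧ b = Sum.inr (Q.step x i)) ∨
             (∃ x i, b = Sum.inl x ∧ a = Sum.inr (Q.step x i))
  symm := by
    refine ⟨?_⟩
    rintro a b (⟨x, i, h1, h2⟩ | ⟨x, i, h1, h2⟩)
    · exact Or.inr ⟨x, i, h1, h2⟩
    · exact Or.inl ⟨x, i, h1, h2⟩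
  loopless := by
    refine ⟨?_⟩
    rintro a (⟨x, i, h1, h2⟩ | ⟨x, i, h1, h2⟩) <;> (subst h1; simp at h2)

/-- The universal covering quiver `C_r` of `Γ_r`: an `r`-regular tree with bipartite
orientation. -/
structure CrQuiver (r : ℕ) extends BipData r where
  isTree : toBipData.graph.IsTree

/-! ## Representations of `C_r` -/

/-- A finite-dimensional representation of `C_r` over `k` (finitely supported). -/
structure CrRep (k : Type) [Field k] {r : ℕ} (Q : CrQuiver r) where
  Vs : Q.Src → Type
  Vt : Q.Snk → Type
  [acs : ∀ x, AddCommGroup (Vs x)]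
  [mds : ∀ x, Module k (Vs x)]
  [act : ∀ y, AddCommGroup (Vt y)]
  [mdt : ∀ y, Module k (Vt y)]
  [fds : ∀ x, FiniteDimensional k (Vs x)]
  [fdt : ∀ y, FiniteDimensional k (Vt y)]
  map : ∀ (x : Q.Src) (i : Fin r), Vs x →ₗ[k] Vt (Q.step x i)
  finSupp : {z : Q.Src ⊕ Q.Snk |
      Sum.elim (fun x => ∃ v : Vs x, v ≠ 0) (fun y => ∃ v : Vt y, v ≠ 0) z}.Finite

attribute [instance] CrRep.acs CrRep.mds CrRep.act CrRep.mdt CrRep.fds CrRep.fdt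

namespace CrRep

variable {k : Type} [Field k] {r : ℕ} {Q : CrQuiver r}

/-- The support of `M`. -/
def suppSet (M : CrRep k Q) : Set (Q.Src ⊕ Q.Snk) :=
  {z | Sum.elim (fun x => ∃ v : M.Vs x, v ≠ 0) (fun y => ∃ v : M.Vt y, v ≠ 0) z}

/-- `z` belongs to `T(M)`, the minimal subtree of `C_r` containing the support of `M`:
it lies on a path between two support vertices. -/
def inTree (M : CrRep k Q) (z : Q.Src ⊕ Q.Snk) : Prop :=
  ∃ a ∈ M.suppSet, ∃ b ∈ M.suppSet, ∃ p : Q.toBipData.graph.Walk a b,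
    p.IsPath ∧ z ∈ p.support

/-- `z` is a leaf of `M`: a vertex of `T(M)` with at most one neighbour in `T(M)`. -/
def IsLeaf (M : CrRep k Q) (z : Q.Src ⊕ Q.Snk) : Prop :=
  M.inTree z ∧ {w | Q.toBipData.graph.Adj z w ∧ M.inTree w}.Subsingleton

/-- The dimension of `M` at a vertex. -/
noncomputable def dimAt (M : CrRep k Q) (z : Q.Src ⊕ Q.Snk) : ℕ :=
  Sum.elim (fun x => Module.finrank k (M.Vs x)) (fun y => Module.finrank k (M.Vt y)) z

/-- All structure maps of `M` are injective (the class `Inj`). -/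
def AllInj (M : CrRep k Q) : Prop := ∀ x i, Function.Injective ⇑(M.map x i)

/-- All structure maps of `M` are surjective (the class `Sur`). -/
def AllSur (M : CrRep k Q) : Prop := ∀ x i, Function.Surjective ⇑(M.map x i)

end CrRep

/-- Morphisms of representations of `C_r`. -/
structure CrHom {k : Type} [Field k] {r : ℕ} {Q : CrQuiver r} (M N : CrRep k Q) where
  fs : ∀ x, M.Vs x →ₗ[k] N.Vs x
  ft : ∀ y, M.Vt y →ₗ[k] N.Vt y
  comm : ∀ x i, (ft (Q.step x i)).comp (M.map x i) = (N.map x i).comp (fs x)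

/-- A morphism is zero if all its components vanish. -/
def CrHom.IsZero {k : Type} [Field k] {r : ℕ} {Q : CrQuiver r} {M N : CrRep k Q}
    (f : CrHom M N) : Prop :=
  (∀ x, f.fs x = 0) ∧ (∀ y, f.ft y = 0)

/-- Isomorphisms of representations of `C_r`. -/
structure CrIso {k : Type} [Field k] {r : ℕ} {Q : CrQuiver r} (M N : CrRep k Q) where
  es : ∀ x, M.Vs x ≃ₗ[k] N.Vs x
  et : ∀ y, M.Vt y ≃ₗ[k] N.Vt y
  comm : ∀ x i, ((et (Q.step x i) : M.Vt (Q.step x i) →ₗ[k] N.Vt (Q.step x i))).comp (M.map x i)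
      = (N.map x i).comp (es x : M.Vs x →ₗ[k] N.Vs x)

namespace CrRep

variable {k : Type} [Field k] {r : ℕ} {Q : CrQuiver r}

/-- `M` is indecomposable: it is nonzero and its endomorphism ring has no nontrivial
idempotents. -/
def Indec (M : CrRep k Q) : Prop :=
  M.suppSet.Nonempty ∧
  ∀ f : CrHom M M, (∀ x, (f.fs x).comp (f.fs x) = f.fs x) →
    (∀ y, (f.ft y).comp (f.ft y) = f.ft y) →
    f.IsZero ∨ ((∀ x, f.fs x = LinearMap.id) ∧ (∀ y, f.ft y = LinearMap.id))

/-- `M` is balanced: indecomposable with a leaf in `C_r^+` (sources) and a leaf in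
`C_r^-` (sinks). -/
def Balanced (M : CrRep k Q) : Prop :=
  M.Indec ∧ (∃ x : Q.Src, M.IsLeaf (Sum.inl x)) ∧ (∃ y : Q.Snk, M.IsLeaf (Sum.inr y))

end CrRep
/-! ## The push-down functor `π_λ : rep(C_r) → rep(Γ_r)` -/

theorem finiteDimensional_directSum {k : Type} [Field k] {ι : Type} (V : ι → Type)
    [∀ i, AddCommGroup (V i)] [∀ i, Module k (V i)] [∀ i, FiniteDimensional k (V i)]
    (h : {i : ι | ∃ v : V i, v ≠ 0}.Finite) : FiniteDimensional k (⨁ i, V i) := by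
  classical
  set s : Finset ι := h.toFinset with hs
  let g : (⨁ i : {j // j ∈ s}, V i.1) →ₗ[k] ⨁ i, V i :=
    DirectSum.toModule k {j // j ∈ s} (⨁ i, V i) fun i => DirectSum.lof k ι V i.1
  have hfd : FiniteDimensional k (⨁ i : {j // j ∈ s}, V i.1) := by
    have e := DirectSum.linearEquivFunOnFintype k {j // j ∈ s} (fun i : {j // j ∈ s} => V i.1)
    exact Module.Finite.equiv e.symm
  have hsurj : Function.Surjective g := by
    intro m
    induction m using DirectSum.induction_on with
    | zero => exact ⟨0, map_zero g⟩
    | of i x =>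
      by_cases hi : i ∈ s
      · refine ⟨DirectSum.lof k {j // j ∈ s} (fun j : {j // j ∈ s} => V j.1) ⟨i, hi⟩ x, ?_⟩
        simp only [g, DirectSum.toModule_lof]
        rw [DirectSum.lof_eq_of]
      · have hx : x = 0 := by
          by_contra hx
          exact hi (by simpa [hs] using ⟨x, hx⟩)
        exact ⟨0, by simp [hx]⟩
    | add a b ha hb =>
      obtain ⟨a', ha'⟩ := ha
      obtain ⟨b', hb'⟩ := hb
      exact ⟨a' + b', by simp [ha', hb']⟩
  exact Module.Finite.of_surjective g hsurj

namespace CrRep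

variable {k : Type} [Field k] {r : ℕ} {Q : CrQuiver r}

/-- The structure map `π_λ(M)(γ_i) = ⊕_{π(β) = γ_i} M(β)` of the push-down. -/
noncomputable def pushMap (M : CrRep k Q) (i : Fin r) :
    (⨁ x, M.Vs x) →ₗ[k] (⨁ y, M.Vt y) := by
  classical
  exact DirectSum.toModule k Q.Src (⨁ y, M.Vt y) fun x =>
    (DirectSum.lof k Q.Snk (fun y => M.Vt y) (Q.step x i)).comp (M.map x i)

/-- The push-down `π_λ(M)` of a representation of `C_r` along the Galois covering
`π : C_r → Γ_r`. -/
noncomputable def pushdown (M : CrRep k Q) : KRep k r where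
  V1 := ⨁ x, M.Vs x
  V2 := ⨁ y, M.Vt y
  f1 := finiteDimensional_directSum (fun x => M.Vs x)
    (M.finSupp.preimage (Set.injOn_of_injective Sum.inl_injective))
  f2 := finiteDimensional_directSum (fun y => M.Vt y)
    (M.finSupp.preimage (Set.injOn_of_injective Sum.inr_injective))
  map := M.pushMap

end CrRep
/-! ## Automorphisms of `C_r` and the actions of `G = π(Γ_r)` and of `S_r` -/

/-- A quiver automorphism of `C_r` lying over the permutation `σ` of the arrow labels
`γ_1, …, γ_r` of `Γ_r`.  For `σ = 1` these are exactly the deck transformations, i.e.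
the elements of the Galois group `G = π(Γ_r)`. -/
structure CrPermAut {r : ℕ} (Q : CrQuiver r) (σ : Equiv.Perm (Fin r)) where
  es : Q.Src ≃ Q.Src
  et : Q.Snk ≃ Q.Snk
  comm : ∀ x i, Q.step (es x) (σ i) = et (Q.step x i)

/-- An element of the Galois group `G = π(Γ_r)`, acting on `C_r` as a label-preserving
quiver automorphism. -/
abbrev CrAut {r : ℕ} (Q : CrQuiver r) := CrPermAut Q (1 : Equiv.Perm (Fin r))

/-- The induced permutation of the vertex set. -/
def CrPermAut.onV {r : ℕ} {Q : CrQuiver r} {σ : Equiv.Perm (Fin r)} (φ : CrPermAut Q σ) :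
    (Q.Src ⊕ Q.Snk) ≃ (Q.Src ⊕ Q.Snk) :=
  Equiv.sumCongr φ.es φ.et

namespace CrRep

variable {k : Type} [Field k] {r : ℕ} {Q : CrQuiver r}

/-- The twist `σ(M)^g` of a representation by an automorphism `φ` of `C_r` lying over
`σ`:  `(M^φ)_x = M_{φ(x)}` and `(M^φ)(α) = M(φ(α))`.  For `σ = 1` this is the shift
`M ↦ M^g` by an element `g` of the Galois group `G`. -/
noncomputable def twist (M : CrRep k Q) {σ : Equiv.Perm (Fin r)} (φ : CrPermAut Q σ) :
    CrRep k Q where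
  Vs x := M.Vs (φ.es x)
  Vt y := M.Vt (φ.et y)
  acs := fun x => inferInstance
  mds := fun x => inferInstance
  act := fun y => inferInstance
  mdt := fun y => inferInstance
  fds := fun x => inferInstance
  fdt := fun y => inferInstance
  map x i := by
    show M.Vs (φ.es x) →ₗ[k] M.Vt (φ.et (Q.step x i))
    rw [← φ.comm x i]
    exact M.map (φ.es x) (σ i)
  finSupp := by
    have h := M.finSupp.preimage (Set.injOn_of_injective φ.onV.injective)
    convert h using 1
    ext z
    cases z <;> rfl

/-- The shift `M ↦ M^g` of a representation by an element of the Galois group. -/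
noncomputable def shift (M : CrRep k Q) (g : CrAut Q) : CrRep k Q := M.twist g

end CrRep
/-! ## Leaf-connected pairs and the extension `N ∗_f M` -/

/-- `(N, M)` is leaf-connected with connecting arrow `α : x0 → Q.step x0 i0`:
`x0` is a leaf of `M`, the target of `α` is a leaf of `N` and the supports are disjoint. -/
def LeafConnected {k : Type} [Field k] {r : ℕ} {Q : CrQuiver r} (N M : CrRep k Q)
    (x0 : Q.Src) (i0 : Fin r) : Prop :=
  M.IsLeaf (Sum.inl x0) ∧ N.IsLeaf (Sum.inr (Q.step x0 i0)) ∧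
  M.suppSet ∩ N.suppSet = ∅

namespace CrRep

variable {k : Type} [Field k] {r : ℕ} {Q : CrQuiver r}

/-- The auxiliary "correction" map used to define `N ∗_f M`: it equals
`(m, n) ↦ (0, f m)` along the connecting arrow and `0` along every other arrow. -/
noncomputable def starCorr (N M : CrRep k Q) (x0 : Q.Src) (i0 : Fin r)
    (f : M.Vs x0 →ₗ[k] N.Vt (Q.step x0 i0)) (x : Q.Src) (i : Fin r) :
    (M.Vs x × N.Vs x) →ₗ[k] (M.Vt (Q.step x i) × N.Vt (Q.step x i)) := by
  classical
  by_cases h : x = x0 ∧ i = i0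
  · obtain ⟨h1, h2⟩ := h
    subst h1; subst h2
    exact (LinearMap.inr k (M.Vt (Q.step x i)) (N.Vt (Q.step x i))).comp
      (f.comp (LinearMap.fst k (M.Vs x) (N.Vs x)))
  · exact 0

/-- The extension `N ∗_f M` of `M` by `N` along a connecting map `f`:
it restricts to `M` on `supp M`, to `N` on `supp N`, and has the map `f` along the
connecting arrow. -/
noncomputable def star (N M : CrRep k Q) (x0 : Q.Src) (i0 : Fin r)
    (f : M.Vs x0 →ₗ[k] N.Vt (Q.step x0 i0)) : CrRep k Q where
  Vs x := M.Vs x × N.Vs x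
  Vt y := M.Vt y × N.Vt y
  acs := fun x => inferInstance
  mds := fun x => inferInstance
  act := fun y => inferInstance
  mdt := fun y => inferInstance
  fds := fun x => inferInstance
  fdt := fun y => inferInstance
  map x i := (M.map x i).prodMap (N.map x i) + starCorr N M x0 i0 f x i
  finSupp := by
    refine (M.finSupp.union N.finSupp).subset ?_
    rintro (x | y) hz
    · obtain ⟨v, hv⟩ := hz
      by_cases h1 : v.1 = 0
      · have h2 : v.2 ≠ 0 := fun h2 => hv (Prod.ext h1 h2)
        exact Or.inr ⟨v.2, h2⟩
      · exact Or.inl ⟨v.1, h1⟩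
    · obtain ⟨v, hv⟩ := hz
      by_cases h1 : v.1 = 0
      · have h2 : v.2 ≠ 0 := fun h2 => hv (Prod.ext h1 h2)
        exact Or.inr ⟨v.2, h2⟩
      · exact Or.inl ⟨v.1, h1⟩

end CrRep

/-! ## Small trees, and the representations `X^i` -/

namespace CrRep

variable {k : Type} [Field k] {r : ℕ} {Q : CrQuiver r}

/-- The tree `T(L)` of `L` is small: it has leaves among the sources and among the sinks,
every vertex has at most `3` neighbours in the tree, and two distinct vertices with
exactly `3` neighbours in the tree have distance at least `3`. -/
def SmallTree (L : CrRep k Q) : Prop :=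
  (∃ x : Q.Src, L.IsLeaf (Sum.inl x)) ∧ (∃ y : Q.Snk, L.IsLeaf (Sum.inr y)) ∧
  (∀ z, L.inTree z → {w | Q.toBipData.graph.Adj z w ∧ L.inTree w}.ncard ≤ 3) ∧
  (∀ z w, L.inTree z → L.inTree w →
    {u | Q.toBipData.graph.Adj z u ∧ L.inTree u}.ncard = 3 →
    {u | Q.toBipData.graph.Adj w u ∧ L.inTree u}.ncard = 3 →
    z = w ∨ 3 ≤ Q.toBipData.graph.dist z w)

/-- `X` is (isomorphic to) the representation `X^i` based at the source `x0`: it is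
indecomposable, one-dimensional at `x0` and at the vertices `t(β_j)`, `j ≠ i`,
zero elsewhere, with isomorphisms along all arrows `β_j`, `j ≠ i`. -/
def IsXi (x0 : Q.Src) (i : Fin r) (X : CrRep k Q) : Prop :=
  X.Indec ∧
  (∀ x : Q.Src, (∃ v : X.Vs x, v ≠ 0) ↔ x = x0) ∧
  (∀ y : Q.Snk, (∃ v : X.Vt y, v ≠ 0) ↔ ∃ j : Fin r, j ≠ i ∧ y = Q.step x0 j) ∧
  Module.finrank k (X.Vs x0) = 1 ∧
  (∀ j : Fin r, j ≠ i → Function.Bijective ⇑(X.map x0 j))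

/-- `M` is `S_r`-stable with respect to the choice `Φ` of automorphisms of `C_r` lying
over the permutations `σ ∈ S_r` of the arrows of `Γ_r`: `M ≅ σ(M)^{g_σ}` for all `σ`. -/
def SrStable (M : CrRep k Q) (Φ : ∀ σ : Equiv.Perm (Fin r), CrPermAut Q σ) : Prop :=
  ∀ σ : Equiv.Perm (Fin r), Nonempty (CrIso M (M.twist (Φ σ)))

end CrRep

/-! ## Abstract Auslander–Reiten data for `rep(C_r)` and `rep(Γ_r)` -/

/-- Abstract Auslander–Reiten-theoretic data for the representations of the universal
covering quiver `C_r` and of `Γ_r`: the AR translates, AR components, quasi-simplicity,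
quasi-length, the preprojective/preinjective classes downstairs, cones in a component,
almost split sequences and injectivity of representations of `C_r`. -/
structure CoverAR (k : Type) [Field k] {r : ℕ} (Q : CrQuiver r) where
  /-- The AR translate `τ_{C_r}` of `rep(C_r)`. -/
  tauC : Equiv.Perm (CrRep k Q)
  /-- The AR translate `τ` of `rep(Γ_r)`. -/
  tauK : Equiv.Perm (KRep k r)
  /-- Same AR component in `rep(C_r)`. -/
  sameC : CrRep k Q → CrRep k Q → Prop
  sameC_equiv : Equivalence sameC
  sameC_tau : ∀ M, sameC M (tauC M)
  /-- Same AR component in `rep(Γ_r)`. -/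
  sameK : KRep k r → KRep k r → Prop
  sameK_equiv : Equivalence sameK
  sameK_tau : ∀ M, sameK M (tauK M)
  /-- Quasi-simple in `rep(C_r)`. -/
  qsC : CrRep k Q → Prop
  /-- Quasi-simple in `rep(Γ_r)`. -/
  qsK : KRep k r → Prop
  /-- Quasi-length in `rep(C_r)`. -/
  qlC : CrRep k Q → ℕ
  /-- Preprojective representations of `Γ_r` (the component `𝒫`). -/
  Preproj : KRep k r → Prop
  /-- Preinjective representations of `Γ_r` (the component `ℐ`). -/
  Preinj : KRep k r → Prop
  /-- The cone `(X →)` of successors of `X` in its AR component. -/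
  succConeC : CrRep k Q → Set (CrRep k Q)
  /-- The cone `(→ X)` of predecessors of `X` in its AR component. -/
  predConeC : CrRep k Q → Set (CrRep k Q)
  /-- `ARSeqTriple A B C` : there is an almost split sequence `0 → A → B → C → 0`. -/
  ARSeqTriple : CrRep k Q → CrRep k Q → CrRep k Q → Prop
  /-- `M` is an injective representation of `C_r`. -/
  InjRep : CrRep k Q → Prop

namespace CoverAR

variable {k : Type} [Field k] {r : ℕ} {Q : CrQuiver r}

/-- `M ∈ rep(C_r)` is regular: its push-down `π_λ(M)` is neither preprojective nor
preinjective. -/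
def RegularC (A : CoverAR k Q) (M : CrRep k Q) : Prop :=
  ¬ A.Preproj M.pushdown ∧ ¬ A.Preinj M.pushdown

/-- `N ∈ rep(Γ_r)` is regular. -/
def RegularK (A : CoverAR k Q) (N : KRep k r) : Prop :=
  ¬ A.Preproj N ∧ ¬ A.Preinj N

/-- The regular component `𝒟` of `rep(C_r)` containing `X` has width `W_C(𝒟) = w`:
there are quasi-simple `I_𝒟`, `S_𝒟` in the component of `X` with
`(I_𝒟 →) = Inj ∩ 𝒟` (equivalently: the whole `τ⁻¹`-orbit of `I_𝒟` lies in `Inj`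
while `τ I_𝒟 ∉ Inj`), dually `(→ S_𝒟) = Sur ∩ 𝒟`, and `τ^{w+1} I_𝒟 = S_𝒟`. -/
def IsWidth (A : CoverAR k Q) (X : CrRep k Q) (w : ℕ) : Prop :=
  ∃ I S : CrRep k Q, A.qsC I ∧ A.qsC S ∧ A.sameC X I ∧ A.sameC X S ∧
    (∀ j : ℕ, ((A.tauC⁻¹ ^ j) I).AllInj) ∧ ¬ (A.tauC I).AllInj ∧
    (∀ j : ℕ, ((A.tauC ^ j) S).AllSur) ∧ ¬ (A.tauC⁻¹ S).AllSur ∧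
    (A.tauC ^ (w + 1)) I = S

/-- The regular component of `X ∈ rep(Γ_r)` has width `W(𝒞) = w`
(formulated as in `KroneckerAR.IsWidth`). -/
def IsWidthK (A : CoverAR k Q) (X : KRep k r) (w : ℕ) : Prop :=
  ∃ MC WC : KRep k r, A.qsK MC ∧ A.qsK WC ∧
    A.sameK X MC ∧ A.sameK X WC ∧
    (∀ j : ℕ, ((A.tauK⁻¹ ^ j) MC).EKP) ∧ ¬ (A.tauK MC).EKP ∧
    (∀ j : ℕ, ((A.tauK ^ j) WC).EIP) ∧ ¬ (A.tauK⁻¹ WC).EIP ∧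
    (A.tauK ^ (w + 1)) MC = WC

end CoverAR

/-! ## Auxiliary lemmas for Statement 17 -/

namespace Statement17Aux


open SimpleGraph

variable {V : Type} {G : SimpleGraph V}

lemma exists_walk_to_getVert {u v : V} (p : G.Walk u v) (i : ℕ) :
    ∃ q : G.Walk u (p.getVert i), q.length ≤ i := by
  induction p generalizing i with
  | nil => exact ⟨(SimpleGraph.Walk.nil).copy rfl (by cases i <;> rfl), by simp⟩
  | @cons a c d h q ih =>
    cases i with
    | zero => exact ⟨(SimpleGraph.Walk.nil).copy rfl (by simp), by simp⟩
    | succ n =>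
      obtain ⟨q', hq'⟩ := ih n
      exact ⟨(q'.cons h).copy rfl (by simp), by simpa using Nat.succ_le_succ hq'⟩

lemma dist_getVert_left_le {u v : V} (p : G.Walk u v) (i : ℕ) :
    G.dist u (p.getVert i) ≤ i := by
  obtain ⟨q, hq⟩ := exists_walk_to_getVert p i
  exact le_trans (SimpleGraph.dist_le q) hq

lemma dist_getVert_right_le {u v : V} (p : G.Walk u v) {i : ℕ} (hi : i ≤ p.length) :
    G.dist (p.getVert i) v ≤ p.length - i := by
  have h1 := dist_getVert_left_le p.reverse (p.length - i)
  rw [SimpleGraph.Walk.getVert_reverse] at h1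
  have h2 : p.length - (p.length - i) = i := by omega
  rw [h2] at h1
  rw [SimpleGraph.dist_comm]
  exact h1

/-- On a geodesic walk, the distance from the start to the `i`-th vertex is `i`. -/
lemma dist_getVert_eq (hconn : G.Connected) {u v : V} (p : G.Walk u v)
    (hp : p.length = G.dist u v) {i : ℕ} (hi : i ≤ p.length) :
    G.dist u (p.getVert i) = i ∧ G.dist (p.getVert i) v = p.length - i := by
  have h1 := dist_getVert_left_le p i
  have h2 := dist_getVert_right_le p hi
  have h3 := hconn.dist_triangle (u := u) (v := p.getVert i) (w := v)
  omega



open SimpleGraph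

variable {V : Type} {G : SimpleGraph V}

lemma walk_length_parity (col : V → ZMod 2) (hcol : ∀ ⦃a b : V⦄, G.Adj a b → col a + col b = 1)
    {u v : V} (p : G.Walk u v) : (p.length : ZMod 2) = col u + col v := by
  induction p with
  | nil => simp [CharTwo.add_self_eq_zero]
  | @cons a c d h q ih =>
    have := hcol h
    push_cast [SimpleGraph.Walk.length_cons]
    rw [ih]
    have h2 : (2 : ZMod 2) = 0 := rfl
    linear_combination this + (1 - col a) * h2

lemma dist_parity (hconn : G.Connected) (col : V → ZMod 2)
    (hcol : ∀ ⦃a b : V⦄, G.Adj a b → col a + col b = 1) (u v : V) :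
    ((G.dist u v : ℕ) : ZMod 2) = col u + col v := by
  obtain ⟨p, hp⟩ := hconn.exists_walk_length_eq_dist u v
  rw [← hp]
  exact walk_length_parity col hcol p

/-- Along an edge, distances to a fixed vertex change by exactly one. -/
lemma adj_dist_cases (hconn : G.Connected) (col : V → ZMod 2)
    (hcol : ∀ ⦃a b : V⦄, G.Adj a b → col a + col b = 1) {u w : V} (h : G.Adj u w) (s : V) :
    G.dist u s = G.dist w s + 1 ∨ G.dist w s = G.dist u s + 1 := by
  have huw : G.dist u w = 1 := by rwa [SimpleGraph.dist_eq_one_iff_adj]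
  have h1 : G.dist u s ≤ 1 + G.dist w s := by
    have := hconn.dist_triangle (u := u) (v := w) (w := s); omega
  have h2 : G.dist w s ≤ 1 + G.dist u s := by
    have := hconn.dist_triangle (u := w) (v := u) (w := s)
    have : G.dist w u = 1 := by rwa [SimpleGraph.dist_comm]
    omega
  have hne : G.dist u s ≠ G.dist w s := by
    intro heq
    have p1 := dist_parity hconn col hcol u s
    have p2 := dist_parity hconn col hcol w s
    rw [heq] at p1
    rw [p1] at p2
    have : col u = col w := by linear_combination p2
    have h1 := hcol h
    rw [this, CharTwo.add_self_eq_zero] at h1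
    exact zero_ne_one h1
  omega

/-- In a tree, the neighbour of `z` strictly closer to `s` is unique. -/
lemma unique_closer_neighbor (hconn : G.Connected) (hac : G.IsAcyclic)
    {z s v1 v2 : V} (h1 : G.Adj z v1) (h2 : G.Adj z v2)
    (hd1 : G.dist v1 s + 1 = G.dist z s) (hd2 : G.dist v2 s + 1 = G.dist z s) :
    v1 = v2 := by
  obtain ⟨q1, hq1⟩ := hconn.exists_walk_length_eq_dist v1 s
  obtain ⟨q2, hq2⟩ := hconn.exists_walk_length_eq_dist v2 s
  have hw1 : (q1.cons h1).length = G.dist z s := by simp [hq1, ← hd1]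
  have hw2 : (q2.cons h2).length = G.dist z s := by simp [hq2, ← hd2]
  have hp1 : (q1.cons h1).IsPath := SimpleGraph.Walk.isPath_of_length_eq_dist _ hw1
  have hp2 : (q2.cons h2).IsPath := SimpleGraph.Walk.isPath_of_length_eq_dist _ hw2
  have heq : (⟨q1.cons h1, hp1⟩ : G.Path z s) = ⟨q2.cons h2, hp2⟩ := hac.path_unique _ _
  have heqw : q1.cons h1 = q2.cons h2 := congrArg Subtype.val heq
  have := congrArg (fun w : G.Walk z s => w.getVert 1) heqw
  simpa using this

/-- `V`-shape bound: along a geodesic from `u` to `v`, the distance to any `s`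
at step `i` is bounded by the endpoint distances. -/
lemma vshape (hconn : G.Connected) (hac : G.IsAcyclic) (col : V → ZMod 2)
    (hcol : ∀ ⦃a b : V⦄, G.Adj a b → col a + col b = 1)
    {u v : V} (p : G.Walk u v) (hp : p.length = G.dist u v) (s : V)
    {i : ℕ} (hi : i ≤ p.length) :
    G.dist (p.getVert i) s + i ≤ G.dist u s ∨
      G.dist (p.getVert i) s + (p.length - i) ≤ G.dist v s := by
  have hstep : ∀ j, j < p.length →
      G.dist (p.getVert (j + 1)) s = G.dist (p.getVert j) s + 1 ∨
      G.dist (p.getVert j) s = G.dist (p.getVert (j + 1)) s + 1 := by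
    intro j hj
    have hadj := p.adj_getVert_succ hj
    rcases adj_dist_cases hconn col hcol hadj s with h | h
    · exact Or.inr h
    · exact Or.inl h
  have hprop : ∀ l, l < p.length →
      G.dist (p.getVert (l + 1)) s = G.dist (p.getVert l) s + 1 →
      ∀ j, l ≤ j → j < p.length →
      G.dist (p.getVert (j + 1)) s = G.dist (p.getVert j) s + 1 := by
    intro l hl hup j hlj hj
    induction j with
    | zero =>
      have : l = 0 := Nat.le_zero.mp hlj
      subst this; exact hup
    | succ n ih =>
      rcases Nat.eq_or_lt_of_le hlj with heq | hlt
      · rw [← heq]; exact hup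
      · have hn1 : G.dist (p.getVert (n + 1)) s = G.dist (p.getVert n) s + 1 :=
          ih (by omega) (by omega)
        rcases hstep (n + 1) hj with h | h
        · exact h
        · exfalso
          rw [show n + 1 + 1 = n + 2 from rfl] at h
          have hadj1 : G.Adj (p.getVert (n + 1)) (p.getVert n) :=
            (p.adj_getVert_succ (by omega)).symm
          have hadj2 : G.Adj (p.getVert (n + 1)) (p.getVert (n + 2)) :=
            p.adj_getVert_succ hj
          have heqv : p.getVert n = p.getVert (n + 2) :=
            unique_closer_neighbor hconn hac (s := s) hadj1 hadj2 (by omega) (by omega)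
          have d1 := (dist_getVert_eq hconn p hp (i := n) (by omega)).1
          have d2 := (dist_getVert_eq hconn p hp (i := n + 2) (by omega)).1
          rw [heqv] at d1
          omega
  by_cases hup : ∃ l, l < i ∧
      G.dist (p.getVert (l + 1)) s = G.dist (p.getVert l) s + 1
  · obtain ⟨l, hl, hlu⟩ := hup
    right
    have hall : ∀ d, l + d ≤ p.length →
        G.dist (p.getVert (l + d)) s = G.dist (p.getVert l) s + d := by
      intro d hd
      induction d with
      | zero => simp
      | succ n ih =>
        have h1 := ih (by omega)
        have h2 := hprop l (by omega) hlu (l + n) (by omega) (by omega)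
        have : l + (n + 1) = (l + n) + 1 := by omega
        rw [this, h2, h1]
        omega
    have h1 := hall (i - l) (by omega)
    have h2 := hall (p.length - l) (by omega)
    have e1 : l + (i - l) = i := by omega
    have e2 : l + (p.length - l) = p.length := by omega
    rw [e1] at h1
    rw [e2] at h2
    have hfl : G.dist (p.getVert p.length) s = G.dist v s := by
      rw [SimpleGraph.Walk.getVert_length]
    omega
  · left
    push_neg at hup
    have hdown : ∀ j, j ≤ i → G.dist (p.getVert j) s + j ≤ G.dist (p.getVert 0) s := by
      intro j hj
      induction j with
      | zero => omega
      | succ n ih =>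
        have h1 := ih (by omega)
        have h2 := hstep n (by omega)
        have h3 := hup n (by omega)
        omega
    have := hdown i le_rfl
    have hf0 : G.dist (p.getVert 0) s = G.dist u s := by
      rw [SimpleGraph.Walk.getVert_zero]
    omega

/-- If distances add up, `w` lies on the geodesic at the expected position. -/
lemma on_geodesic (hconn : G.Connected) (hac : G.IsAcyclic)
    {u v : V} (p : G.Walk u v) (hp : p.length = G.dist u v) (w : V)
    (hsum : G.dist u w + G.dist w v = G.dist u v) :
    p.getVert (G.dist u w) = w := by
  obtain ⟨q1, hq1⟩ := hconn.exists_walk_length_eq_dist u w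
  obtain ⟨q2, hq2⟩ := hconn.exists_walk_length_eq_dist w v
  have hlen : (q1.append q2).length = G.dist u v := by
    rw [SimpleGraph.Walk.length_append, hq1, hq2]; exact hsum
  have hpath : (q1.append q2).IsPath := SimpleGraph.Walk.isPath_of_length_eq_dist _ hlen
  have hppath : p.IsPath := SimpleGraph.Walk.isPath_of_length_eq_dist _ hp
  have heq : (⟨p, hppath⟩ : G.Path u v) = ⟨q1.append q2, hpath⟩ := hac.path_unique _ _
  have heqw : p = q1.append q2 := congrArg Subtype.val heq
  rw [heqw, SimpleGraph.Walk.getVert_append]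
  rw [hq1]
  simp



lemma finrank_directSum_eq_sum {k : Type} [Field k] {ι : Type} (V : ι → Type)
    [∀ i, AddCommGroup (V i)] [∀ i, Module k (V i)] [∀ i, FiniteDimensional k (V i)]
    (h : {i : ι | ∃ v : V i, v ≠ 0}.Finite) :
    Module.finrank k (⨁ i, V i) = ∑ i ∈ h.toFinset, Module.finrank k (V i) := by
  classical
  set s : Finset ι := h.toFinset with hs
  have hsub : ∀ i : ι, i ∉ s → Subsingleton (V i) := by
    intro i hi
    constructor
    intro x y
    by_contra hxy
    have : ∃ v : V i, v ≠ 0 := by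
      by_cases hx : x = 0
      · exact ⟨y, fun hy => hxy (hx.trans hy.symm)⟩
      · exact ⟨x, hx⟩
    exact hi (by simpa [hs] using this)
  let g : (⨁ i : {j // j ∈ s}, V i.1) →ₗ[k] ⨁ i, V i :=
    DirectSum.toModule k {j // j ∈ s} (⨁ i, V i) fun i => DirectSum.lof k ι V i.1
  let g' : (⨁ i, V i) →ₗ[k] ⨁ i : {j // j ∈ s}, V i.1 :=
    DirectSum.toModule k ι _ fun i =>
      if hi : i ∈ s then DirectSum.lof k {j // j ∈ s} (fun i : {j // j ∈ s} => V i.1) ⟨i, hi⟩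
      else 0
  have hgg' : g.comp g' = LinearMap.id := by
    apply DirectSum.linearMap_ext
    intro i
    ext v
    by_cases hi : i ∈ s
    · simp [g, g', DirectSum.toModule_lof, hi]
    · have := hsub i hi
      have hv : v = 0 := Subsingleton.elim v 0
      simp [hv]
  have hg'g : g'.comp g = LinearMap.id := by
    apply DirectSum.linearMap_ext
    intro i
    ext v
    simp [g, g', DirectSum.toModule_lof, i.2]
  let e : (⨁ i : {j // j ∈ s}, V i.1) ≃ₗ[k] ⨁ i, V i :=
    LinearEquiv.ofLinear g g' hgg' hg'g
  rw [← e.finrank_eq]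
  rw [Module.finrank_directSum]
  rw [← Finset.sum_coe_sort s (fun i => Module.finrank k (V i))]


section Quiver

variable {r : ℕ} {Q : CrQuiver r}

lemma adj_iff {z w : Q.Src ⊕ Q.Snk} :
    Q.toBipData.graph.Adj z w ↔
      ((∃ x i, z = Sum.inl x ∧ w = Sum.inr (Q.step x i)) ∨
       (∃ x i, w = Sum.inl x ∧ z = Sum.inr (Q.step x i))) := Iff.rfl

@[simp] lemma onV_inl {σ : Equiv.Perm (Fin r)} (φ : CrPermAut Q σ) (x : Q.Src) :
    φ.onV (Sum.inl x) = Sum.inl (φ.es x) := rfl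

@[simp] lemma onV_inr {σ : Equiv.Perm (Fin r)} (φ : CrPermAut Q σ) (y : Q.Snk) :
    φ.onV (Sum.inr y) = Sum.inr (φ.et y) := rfl

lemma adj_map {σ : Equiv.Perm (Fin r)} (φ : CrPermAut Q σ) {z w : Q.Src ⊕ Q.Snk}
    (h : Q.toBipData.graph.Adj z w) : Q.toBipData.graph.Adj (φ.onV z) (φ.onV w) := by
  rcases adj_iff.mp h with ⟨x, i, rfl, rfl⟩ | ⟨x, i, rfl, rfl⟩
  · exact adj_iff.mpr (Or.inl ⟨φ.es x, σ i, rfl, by rw [onV_inr, φ.comm]⟩)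
  · exact adj_iff.mpr (Or.inr ⟨φ.es x, σ i, rfl, by rw [onV_inr, φ.comm]⟩)

/-- The inverse of an automorphism over `σ`, lying over `σ⁻¹`. -/
def invAut {σ : Equiv.Perm (Fin r)} (φ : CrPermAut Q σ) : CrPermAut Q σ⁻¹ where
  es := φ.es.symm
  et := φ.et.symm
  comm := fun x i => by
    apply φ.et.injective
    rw [← φ.comm]
    simp

@[simp] lemma onV_invAut {σ : Equiv.Perm (Fin r)} (φ : CrPermAut Q σ) (z : Q.Src ⊕ Q.Snk) :
    (invAut φ).onV (φ.onV z) = z := by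
  cases z <;> simp [invAut]

lemma dist_onV_le (hconn : Q.toBipData.graph.Connected) {σ : Equiv.Perm (Fin r)}
    (φ : CrPermAut Q σ) (z w : Q.Src ⊕ Q.Snk) :
    Q.toBipData.graph.dist (φ.onV z) (φ.onV w) ≤ Q.toBipData.graph.dist z w := by
  obtain ⟨p, hp⟩ := hconn.exists_walk_length_eq_dist z w
  have hle := SimpleGraph.dist_le
    (p.map (⟨φ.onV, fun h => adj_map φ h⟩ : Q.toBipData.graph →g Q.toBipData.graph))
  rwa [SimpleGraph.Walk.length_map, hp] at hle

lemma dist_onV (hconn : Q.toBipData.graph.Connected) {σ : Equiv.Perm (Fin r)}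
    (φ : CrPermAut Q σ) (z w : Q.Src ⊕ Q.Snk) :
    Q.toBipData.graph.dist (φ.onV z) (φ.onV w) = Q.toBipData.graph.dist z w := by
  refine le_antisymm (dist_onV_le hconn φ z w) ?_
  have := dist_onV_le hconn (invAut φ) (φ.onV z) (φ.onV w)
  rwa [onV_invAut, onV_invAut] at this

variable {k : Type} [Field k]

lemma supp_onV (M : CrRep k Q) {σ : Equiv.Perm (Fin r)} {φ : CrPermAut Q σ}
    (e : CrIso M (M.twist φ)) (z : Q.Src ⊕ Q.Snk) :
    z ∈ M.suppSet ↔ φ.onV z ∈ M.suppSet := by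
  cases z with
  | inl x =>
    rw [onV_inl]
    show (∃ v : M.Vs x, v ≠ 0) ↔ (∃ v : M.Vs (φ.es x), v ≠ 0)
    have ee : M.Vs x ≃ₗ[k] M.Vs (φ.es x) := e.es x
    exact ⟨fun ⟨v, hv⟩ => ⟨ee v, ee.map_ne_zero_iff.mpr hv⟩,
      fun ⟨v, hv⟩ => ⟨ee.symm v, ee.symm.map_ne_zero_iff.mpr hv⟩⟩
  | inr y =>
    rw [onV_inr]
    show (∃ v : M.Vt y, v ≠ 0) ↔ (∃ v : M.Vt (φ.et y), v ≠ 0)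
    have ee : M.Vt y ≃ₗ[k] M.Vt (φ.et y) := e.et y
    exact ⟨fun ⟨v, hv⟩ => ⟨ee v, ee.map_ne_zero_iff.mpr hv⟩,
      fun ⟨v, hv⟩ => ⟨ee.symm v, ee.symm.map_ne_zero_iff.mpr hv⟩⟩

lemma finrank_es (M : CrRep k Q) {σ : Equiv.Perm (Fin r)} {φ : CrPermAut Q σ}
    (e : CrIso M (M.twist φ)) (x : Q.Src) :
    Module.finrank k (M.Vs (φ.es x)) = Module.finrank k (M.Vs x) :=
  (LinearEquiv.finrank_eq ((e.es x : M.Vs x ≃ₗ[k] M.Vs (φ.es x)))).symm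

lemma finrank_et (M : CrRep k Q) {σ : Equiv.Perm (Fin r)} {φ : CrPermAut Q σ}
    (e : CrIso M (M.twist φ)) (y : Q.Snk) :
    Module.finrank k (M.Vt (φ.et y)) = Module.finrank k (M.Vt y) :=
  (LinearEquiv.finrank_eq ((e.et y : M.Vt y ≃ₗ[k] M.Vt (φ.et y)))).symm

/-- Divisibility of an `S_r`-equivariantly fibered sum. -/
lemma dvd_fiber_sum {β : Type} (hr : 0 < r) (T : Finset β) (dim : β → ℕ) (br : β → Fin r)
    (act : Equiv.Perm (Fin r) → β ≃ β)
    (hT : ∀ σ y, y ∈ T ↔ act σ y ∈ T)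
    (hdim : ∀ σ y, dim (act σ y) = dim y)
    (hbr : ∀ σ y, br (act σ y) = σ (br y)) :
    r ∣ ∑ y ∈ T, dim y := by
  classical
  have hfib := Finset.sum_fiberwise_of_maps_to
    (s := T) (t := (Finset.univ : Finset (Fin r))) (g := br)
    (fun y _ => Finset.mem_univ _) dim
  set i0 : Fin r := ⟨0, hr⟩ with hi0
  have hconst : ∀ j : Fin r,
      (∑ y ∈ T.filter (fun y => br y = j), dim y)
        = ∑ y ∈ T.filter (fun y => br y = i0), dim y := by
    intro j
    set σ : Equiv.Perm (Fin r) := Equiv.swap j i0 with hσ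
    refine Finset.sum_equiv (act σ) ?_ ?_
    · intro y
      simp only [Finset.mem_filter]
      constructor
      · rintro ⟨hy, hby⟩
        refine ⟨(hT σ y).mp hy, ?_⟩
        rw [hbr, hby, hσ, Equiv.swap_apply_left]
      · rintro ⟨hy, hby⟩
        refine ⟨(hT σ y).mpr hy, ?_⟩
        rw [hbr] at hby
        have : br y = σ.symm i0 := by
          rw [← hby, Equiv.symm_apply_apply]
        rw [this, hσ, Equiv.symm_swap, Equiv.swap_apply_right]
    · intro y _
      exact (hdim σ y).symm
  rw [← hfib]
  have hcalc : (∑ j : Fin r, ∑ y ∈ T.filter (fun y => br y = j), dim y)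
      = r * ∑ y ∈ T.filter (fun y => br y = i0), dim y := by
    calc ∑ j : Fin r, ∑ y ∈ T.filter (fun y => br y = j), dim y
        = ∑ _j : Fin r, ∑ y ∈ T.filter (fun y => br y = i0), dim y :=
          Finset.sum_congr rfl fun j _ => hconst j
      _ = r * ∑ y ∈ T.filter (fun y => br y = i0), dim y := by
          rw [Finset.sum_const, Finset.card_univ, Fintype.card_fin, smul_eq_mul]
  rw [hcalc]
  exact Dvd.intro _ rfl

end Quiver

end Statement17Aux

/-! ## Statement 17 -/


theorem statement17 {k : Type} [Field k] [IsAlgClosed k] {r : ℕ} (hr : 3 ≤ r)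
    (Q : CrQuiver r) (M : CrRep k Q) (hM : M.Indec)
    (Φ : ∀ σ : Equiv.Perm (Fin r), CrPermAut Q σ) (hΦ : M.SrStable Φ)
    (a b : ℕ) (hdim : M.pushdown.dimVec = (a, b)) :
    r ∣ a ∨ r ∣ b := by
  classical
  open Statement17Aux in
  have ha' : Module.finrank k (⨁ x, M.Vs x) = a := congrArg Prod.fst hdim
  have hb' : Module.finrank k (⨁ y, M.Vt y) = b := congrArg Prod.snd hdim
  have hconn : Q.toBipData.graph.Connected := Q.isTree.isConnected
  have hac : Q.toBipData.graph.IsAcyclic := Q.isTree.IsAcyclic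
  set G := Q.toBipData.graph with hGdef
  set col : Q.Src ⊕ Q.Snk → ZMod 2 := Sum.elim (fun _ => 0) (fun _ => 1) with hcoldef
  have hcol : ∀ ⦃z w : Q.Src ⊕ Q.Snk⦄, G.Adj z w → col z + col w = 1 := by
    intro z w hzw
    rcases Statement17Aux.adj_iff.mp hzw with ⟨x, i, rfl, rfl⟩ | ⟨x, i, rfl, rfl⟩ <;>
      simp [hcoldef]
  have hS : M.suppSet.Finite := M.finSupp
  set Sf : Finset (Q.Src ⊕ Q.Snk) := hS.toFinset with hSfdef
  have hmem : ∀ z, z ∈ Sf ↔ z ∈ M.suppSet := fun z => hS.mem_toFinset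
  have hSne : Sf.Nonempty := by
    obtain ⟨z, hz⟩ := hM.1
    exact ⟨z, (hmem z).mpr hz⟩
  -- support and dimensions are invariant under each chosen automorphism
  have hsupp : ∀ (σ : Equiv.Perm (Fin r)) (z), z ∈ Sf ↔ (Φ σ).onV z ∈ Sf := by
    intro σ z
    rw [hmem, hmem]
    exact Statement17Aux.supp_onV M (hΦ σ).some z
  have hdistinv : ∀ (σ : Equiv.Perm (Fin r)) (z w), G.dist ((Φ σ).onV z) ((Φ σ).onV w)
      = G.dist z w := fun σ z w => Statement17Aux.dist_onV hconn (Φ σ) z w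
  -- the diameter of the support
  set D := Sf.sup (fun z => Sf.sup (fun w => G.dist z w)) with hDdef
  obtain ⟨za, hza, hza'⟩ := Finset.exists_mem_eq_sup Sf hSne
    (fun z => Sf.sup (fun w => G.dist z w))
  obtain ⟨zb, hzb, hzb'⟩ := Finset.exists_mem_eq_sup Sf hSne (fun w => G.dist za w)
  have hDval : G.dist za zb = D := by rw [hDdef, hza', hzb']
  have hDle : ∀ z ∈ Sf, ∀ w ∈ Sf, G.dist z w ≤ D := by
    intro z hz w hw
    calc G.dist z w ≤ Sf.sup (fun w => G.dist z w) := Finset.le_sup hw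
      _ ≤ D := Finset.le_sup (f := fun z => Sf.sup (fun w => G.dist z w)) hz
  obtain ⟨p, hp⟩ := hconn.exists_walk_length_eq_dist za zb
  have hplen : p.length = D := by rw [hp, hDval]
  set m : ℕ := (D + 1) / 2 with hmdef
  set c : Q.Src ⊕ Q.Snk := p.getVert m with hcdef
  -- the midpoint has eccentricity at most m
  have hecc_c : ∀ s ∈ Sf, G.dist c s ≤ m := by
    intro s hs
    have hv := Statement17Aux.vshape hconn hac col hcol p hp s (i := m) (by omega)
    rw [← hcdef] at hv
    have h1 : G.dist za s ≤ D := hDle za hza s hs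
    have h2 : G.dist zb s ≤ D := hDle zb hzb s hs
    rcases hv with h | h <;> omega
  -- vertices of eccentricity at most m lie at the middle of the geodesic
  have hchar : ∀ v, (∀ s ∈ Sf, G.dist v s ≤ m) →
      v = p.getVert (D / 2) ∨ v = p.getVert m := by
    intro v hv
    have d1 : G.dist v za ≤ m := hv za hza
    have d2 : G.dist v zb ≤ m := hv zb hzb
    have hc1 : G.dist za v = G.dist v za := SimpleGraph.dist_comm
    have htri : G.dist za zb ≤ G.dist za v + G.dist v zb := hconn.dist_triangle
    have hpar : (G.dist za v + G.dist v zb) % 2 = D % 2 := by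
      have p1 := Statement17Aux.dist_parity hconn col hcol za v
      have p2 := Statement17Aux.dist_parity hconn col hcol v zb
      have p3 := Statement17Aux.dist_parity hconn col hcol za zb
      have hcast : ((G.dist za v + G.dist v zb : ℕ) : ZMod 2)
          = ((G.dist za zb : ℕ) : ZMod 2) := by
        push_cast
        rw [p1, p2, p3]
        have h2 : (2 : ZMod 2) = 0 := rfl
        linear_combination (col v) * h2
      have hmod := (ZMod.natCast_eq_natCast_iff _ _ _).mp hcast
      have : G.dist za zb % 2 = D % 2 := by rw [hDval]
      simpa [Nat.ModEq, this] using hmod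
    have hsum : G.dist za v + G.dist v zb = G.dist za zb := by omega
    have hgv := Statement17Aux.on_geodesic hconn hac p hp v hsum
    have hcase : G.dist za v = D / 2 ∨ G.dist za v = m := by omega
    rcases hcase with h | h
    · left; rw [← hgv, h]
    · right; rw [← hgv, h]
  -- the midpoint is fixed by every automorphism in the family
  have hcolV : ∀ (σ : Equiv.Perm (Fin r)) (z), col ((Φ σ).onV z) = col z := by
    intro σ z; cases z <;> rfl
  have hfix : ∀ σ : Equiv.Perm (Fin r), (Φ σ).onV c = c := by
    intro σ
    have h1 : ∀ s ∈ Sf, G.dist ((Φ σ).onV c) s ≤ m := by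
      intro s hs
      set s' := (Statement17Aux.invAut (Φ σ)).onV s with hs'def
      have hss : (Φ σ).onV s' = s := by
        rw [hs'def]; cases s <;> simp [Statement17Aux.invAut]
      have hs'mem : s' ∈ Sf := by
        rw [hsupp σ s', hss]; exact hs
      calc G.dist ((Φ σ).onV c) s = G.dist ((Φ σ).onV c) ((Φ σ).onV s') := by rw [hss]
        _ = G.dist c s' := hdistinv σ c s'
        _ ≤ m := hecc_c s' hs'mem
    rcases hchar _ h1 with h | h
    · -- the image is the other midpoint; use the bipartite colouring
      rcases Nat.even_or_odd D with hev | hodd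
      · obtain ⟨t, ht⟩ := hev
        have : D / 2 = m := by omega
        rw [this] at h
        rw [h, hcdef]
      · exfalso
        have hD2 : D / 2 < p.length := by
          rcases hodd with ⟨t, ht⟩; omega
        have hadj : G.Adj (p.getVert (D / 2)) (p.getVert (D / 2 + 1)) :=
          p.adj_getVert_succ hD2
        have hm2 : D / 2 + 1 = m := by
          rcases hodd with ⟨t, ht⟩; omega
        rw [hm2] at hadj
        have h1 := hcol hadj
        have h2 : col ((Φ σ).onV c) = col c := hcolV σ c
        rw [h] at h2
        rw [hcdef] at h2
        rw [h2, CharTwo.add_self_eq_zero] at h1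
        exact zero_ne_one h1
    · rw [h, hcdef]
  -- case analysis on the type of the fixed midpoint
  have hrpos : 0 < r := by omega
  rcases hcsum : c with x0 | y0
  · -- a source is fixed: r divides b
    right
    have hes : ∀ σ : Equiv.Perm (Fin r), (Φ σ).es x0 = x0 := by
      intro σ
      have := hfix σ
      rw [hcsum, Statement17Aux.onV_inl] at this
      exact Sum.inl_injective this
    have ht : {y : Q.Snk | ∃ v : M.Vt y, v ≠ 0}.Finite :=
      M.finSupp.preimage (Set.injOn_of_injective Sum.inr_injective)
    have hbsum : b = ∑ y ∈ ht.toFinset, Module.finrank k (M.Vt y) := by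
      rw [← hb']
      exact Statement17Aux.finrank_directSum_eq_sum (fun y => M.Vt y) ht
    have hTmem : ∀ y : Q.Snk, y ∈ ht.toFinset ↔ Sum.inr y ∈ M.suppSet := by
      intro y
      rw [ht.mem_toFinset]
      exact Iff.rfl
    -- the branch function
    have hdpos : ∀ y : Q.Snk, G.dist (Sum.inl x0) (Sum.inr y) ≠ 0 := by
      intro y
      exact (hconn.pos_dist_of_ne (by simp)).ne'
    have hPex : ∀ y : Q.Snk, ∃ i : Fin r,
        G.dist (Sum.inr (Q.step x0 i)) (Sum.inr y) + 1 = G.dist (Sum.inl x0) (Sum.inr y) := by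
      intro y
      have hne : G.dist (Sum.inl x0) (Sum.inr y) ≠ 0 := hdpos y
      obtain ⟨q, hq⟩ := hconn.exists_walk_length_eq_dist (Sum.inl x0) (Sum.inr y)
      have hql : 0 < q.length := by omega
      have hadj : G.Adj (Sum.inl x0) (q.getVert 1) := by
        have := q.adj_getVert_succ hql
        rwa [q.getVert_zero] at this
      rcases Statement17Aux.adj_iff.mp hadj with ⟨x, i, hx, hw⟩ | ⟨x, i, hx, hw⟩
      · have hxx : x = x0 := (Sum.inl_injective hx).symm
        subst hxx
        refine ⟨i, ?_⟩
        have hd := (Statement17Aux.dist_getVert_eq hconn q hq (i := 1) (by omega)).2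
        rw [← hw]
        omega
      · exact absurd hw (by simp)
    have hPuniq : ∀ (y : Q.Snk) (i j : Fin r),
        G.dist (Sum.inr (Q.step x0 i)) (Sum.inr y) + 1 = G.dist (Sum.inl x0) (Sum.inr y) →
        G.dist (Sum.inr (Q.step x0 j)) (Sum.inr y) + 1 = G.dist (Sum.inl x0) (Sum.inr y) →
        i = j := by
      intro y i j hi hj
      have ha1 : G.Adj (Sum.inl x0) (Sum.inr (Q.step x0 i)) :=
        Statement17Aux.adj_iff.mpr (Or.inl ⟨x0, i, rfl, rfl⟩)
      have ha2 : G.Adj (Sum.inl x0) (Sum.inr (Q.step x0 j)) :=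
        Statement17Aux.adj_iff.mpr (Or.inl ⟨x0, j, rfl, rfl⟩)
      have := Statement17Aux.unique_closer_neighbor hconn hac ha1 ha2 hi hj
      exact Q.step_inj x0 (Sum.inr_injective this)
    set br : Q.Snk → Fin r := fun y => (hPex y).choose with hbrdef
    have hbrP : ∀ y, G.dist (Sum.inr (Q.step x0 (br y))) (Sum.inr y) + 1
        = G.dist (Sum.inl x0) (Sum.inr y) := fun y => (hPex y).choose_spec
    have hbreq : ∀ (σ : Equiv.Perm (Fin r)) (y), br ((Φ σ).et y) = σ (br y) := by
      intro σ y
      refine hPuniq ((Φ σ).et y) _ _ (hbrP _) ?_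
      have hst : Q.step x0 (σ (br y)) = (Φ σ).et (Q.step x0 (br y)) := by
        rw [← (Φ σ).comm, hes]
      rw [hst]
      have e1 : G.dist (Sum.inr ((Φ σ).et (Q.step x0 (br y)))) (Sum.inr ((Φ σ).et y))
          = G.dist (Sum.inr (Q.step x0 (br y))) (Sum.inr y) := by
        have := hdistinv σ (Sum.inr (Q.step x0 (br y))) (Sum.inr y)
        simpa using this
      have e2 : G.dist (Sum.inl x0) (Sum.inr ((Φ σ).et y))
          = G.dist (Sum.inl x0) (Sum.inr y) := by
        have := hdistinv σ (Sum.inl x0) (Sum.inr y)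
        rw [Statement17Aux.onV_inl, Statement17Aux.onV_inr, hes] at this
        exact this
      rw [e1, e2]
      exact hbrP y
    rw [hbsum]
    refine Statement17Aux.dvd_fiber_sum hrpos ht.toFinset _ br (fun σ => (Φ σ).et) ?_ ?_ hbreq
    · intro σ y
      rw [hTmem, hTmem]
      have := Statement17Aux.supp_onV M (hΦ σ).some (Sum.inr y)
      rwa [Statement17Aux.onV_inr] at this
    · intro σ y
      exact Statement17Aux.finrank_et M (hΦ σ).some y
  · -- a sink is fixed: r divides a
    left
    have het : ∀ σ : Equiv.Perm (Fin r), (Φ σ).et y0 = y0 := by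
      intro σ
      have := hfix σ
      rw [hcsum, Statement17Aux.onV_inr] at this
      exact Sum.inr_injective this
    have hes : ∀ (σ : Equiv.Perm (Fin r)) (i : Fin r),
        (Φ σ).es (Q.back y0 i) = Q.back y0 (σ i) := by
      intro σ i
      have h1 := (Φ σ).comm (Q.back y0 i) i
      rw [Q.step_back, het] at h1
      have h2 := Q.back_step ((Φ σ).es (Q.back y0 i)) (σ i)
      rw [h1] at h2
      exact h2.symm
    have ht : {x : Q.Src | ∃ v : M.Vs x, v ≠ 0}.Finite :=
      M.finSupp.preimage (Set.injOn_of_injective Sum.inl_injective)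
    have hasum : a = ∑ x ∈ ht.toFinset, Module.finrank k (M.Vs x) := by
      rw [← ha']
      exact Statement17Aux.finrank_directSum_eq_sum (fun x => M.Vs x) ht
    have hTmem : ∀ x : Q.Src, x ∈ ht.toFinset ↔ Sum.inl x ∈ M.suppSet := by
      intro x
      rw [ht.mem_toFinset]
      exact Iff.rfl
    have hdpos : ∀ x : Q.Src, G.dist (Sum.inr y0) (Sum.inl x) ≠ 0 := by
      intro x
      exact (hconn.pos_dist_of_ne (by simp)).ne'
    have hPex : ∀ x : Q.Src, ∃ i : Fin r,
        G.dist (Sum.inl (Q.back y0 i)) (Sum.inl x) + 1 = G.dist (Sum.inr y0) (Sum.inl x) := by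
      intro x
      have hne : G.dist (Sum.inr y0) (Sum.inl x) ≠ 0 := hdpos x
      obtain ⟨q, hq⟩ := hconn.exists_walk_length_eq_dist (Sum.inr y0) (Sum.inl x)
      have hql : 0 < q.length := by omega
      have hadj : G.Adj (Sum.inr y0) (q.getVert 1) := by
        have := q.adj_getVert_succ hql
        rwa [q.getVert_zero] at this
      rcases Statement17Aux.adj_iff.mp hadj with ⟨x', i, hx, hw⟩ | ⟨x', i, hw, hx⟩
      · exact absurd hx (by simp)
      · have hyx : y0 = Q.step x' i := Sum.inr_injective hx
        have hx' : x' = Q.back y0 i := by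
          rw [hyx]; exact (Q.back_step x' i).symm
        refine ⟨i, ?_⟩
        have hd := (Statement17Aux.dist_getVert_eq hconn q hq (i := 1) (by omega)).2
        rw [← hx', ← hw]
        omega
    have hPuniq : ∀ (x : Q.Src) (i j : Fin r),
        G.dist (Sum.inl (Q.back y0 i)) (Sum.inl x) + 1 = G.dist (Sum.inr y0) (Sum.inl x) →
        G.dist (Sum.inl (Q.back y0 j)) (Sum.inl x) + 1 = G.dist (Sum.inr y0) (Sum.inl x) →
        i = j := by
      intro x i j hi hj
      have ha1 : G.Adj (Sum.inr y0) (Sum.inl (Q.back y0 i)) :=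
        Statement17Aux.adj_iff.mpr (Or.inr ⟨Q.back y0 i, i, rfl, by rw [Q.step_back]⟩)
      have ha2 : G.Adj (Sum.inr y0) (Sum.inl (Q.back y0 j)) :=
        Statement17Aux.adj_iff.mpr (Or.inr ⟨Q.back y0 j, j, rfl, by rw [Q.step_back]⟩)
      have := Statement17Aux.unique_closer_neighbor hconn hac ha1 ha2 hi hj
      exact Q.back_inj y0 (Sum.inl_injective this)
    set br : Q.Src → Fin r := fun x => (hPex x).choose with hbrdef
    have hbrP : ∀ x, G.dist (Sum.inl (Q.back y0 (br x))) (Sum.inl x) + 1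
        = G.dist (Sum.inr y0) (Sum.inl x) := fun x => (hPex x).choose_spec
    have hbreq : ∀ (σ : Equiv.Perm (Fin r)) (x), br ((Φ σ).es x) = σ (br x) := by
      intro σ x
      refine hPuniq ((Φ σ).es x) _ _ (hbrP _) ?_
      have hst : Q.back y0 (σ (br x)) = (Φ σ).es (Q.back y0 (br x)) := (hes σ (br x)).symm
      rw [hst]
      have e1 : G.dist (Sum.inl ((Φ σ).es (Q.back y0 (br x)))) (Sum.inl ((Φ σ).es x))
          = G.dist (Sum.inl (Q.back y0 (br x))) (Sum.inl x) := by
        have := hdistinv σ (Sum.inl (Q.back y0 (br x))) (Sum.inl x)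
        simpa using this
      have e2 : G.dist (Sum.inr y0) (Sum.inl ((Φ σ).es x))
          = G.dist (Sum.inr y0) (Sum.inl x) := by
        have := hdistinv σ (Sum.inr y0) (Sum.inl x)
        rw [Statement17Aux.onV_inl, Statement17Aux.onV_inr, het] at this
        exact this
      rw [e1, e2]
      exact hbrP x
    rw [hasum]
    refine Statement17Aux.dvd_fiber_sum hrpos ht.toFinset _ br (fun σ => (Φ σ).es) ?_ ?_ hbreq
    · intro σ x
      rw [hTmem, hTmem]
      have := Statement17Aux.supp_onV M (hΦ σ).some (Sum.inl x)
      rwa [Statement17Aux.onV_inl] at this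
    · intro σ x
      exact Statement17Aux.finrank_es M (hΦ σ).some x
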